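/- A 1-cell of the form (∅, D) is a face of exactly one 0-cell, namely ({x}, D) where D = {i} and x is the maximal element of T with respect to <_i; moreover, if this 0-cell is not balanced, then its type equals the type of (∅, D). -/

import Mathlib

/-- `X ⊆ T` is dominant with respect to `C ⊆ I` (for the family of linear orders `o`)
if either `X = ∅`, or `X ≠ ∅` and there is no `y : T` with `min_i X <_i y` for all `i ∈ C`. -/
def Dominant {T I : Type*} (o : I → LinearOrder T) (X : Finset T) (C : Finset I) : Prop :=
  ∀ hX : X.Nonempty, ¬ ∃ y : T, ∀ i ∈ C, (o i).lt (@Finset.min' T (o i) X hX) y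

/-- A pair `(X, C)` is a cell if `C ≠ ∅`, `X` is dominant with respect to `C`,
and `|C \ c(X)| ≤ 1`. -/
def IsCell {T I : Type*} [DecidableEq T] [DecidableEq I]
    (o : I → LinearOrder T) (c : T → I) (X : Finset T) (C : Finset I) : Prop :=
  C.Nonempty ∧ Dominant o X C ∧ (C \ X.image c).card ≤ 1

/-- A 0-cell is a cell `(X, C)` with `|C| = |X|`. -/
def IsZeroCell {T I : Type*} [DecidableEq T] [DecidableEq I]
    (o : I → LinearOrder T) (c : T → I) (X : Finset T) (C : Finset I) : Prop :=
  IsCell o c X C ∧ C.card = X.card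

/-- A 1-cell is a cell `(X, C)` with `|C| = |X| + 1`. -/
def IsOneCell {T I : Type*} [DecidableEq T] [DecidableEq I]
    (o : I → LinearOrder T) (c : T → I) (X : Finset T) (C : Finset I) : Prop :=
  IsCell o c X C ∧ C.card = X.card + 1

/-- A 1-cell `(Y, D)` is a face of a 0-cell `(X, C)` if either `D = C` and
`Y = X \ {x}` for some `x ∈ X`, or `Y = X` and `D = C ∪ {i}` for some `i ∉ C`. -/
def IsFace {T I : Type*} [DecidableEq T] [DecidableEq I]
    (o : I → LinearOrder T) (c : T → I)
    (Y : Finset T) (D : Finset I) (X : Finset T) (C : Finset I) : Prop :=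
  IsOneCell o c Y D ∧ IsZeroCell o c X C ∧
    ((D = C ∧ ∃ x ∈ X, Y = X.erase x) ∨ (Y = X ∧ ∃ i, i ∉ C ∧ D = insert i C))

/-- A 1-cell of the form `(∅, D)`, with `D = {i}`, is a face of exactly one 0-cell,
namely `({x}, D)` where `x` is the maximal element of `T` with respect to `<_i`;
and if this 0-cell is not balanced, then its type equals the type of `(∅, D)`,
namely `i`. -/
theorem stmt8 {T I : Type*} [Fintype T] [Fintype I] [Nonempty T] [Nonempty I]
    [DecidableEq T] [DecidableEq I] (o : I → LinearOrder T) (c : T → I)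
    (D : Finset I) (i : I) (hD : D = {i})
    (h1 : IsOneCell o c (∅ : Finset T) D) :
    (∀ X C, IsFace o c ∅ D X C ↔
        (X = {@Finset.max' T (o i) Finset.univ Finset.univ_nonempty} ∧ C = D)) ∧
    (D ≠ Finset.image c {@Finset.max' T (o i) Finset.univ Finset.univ_nonempty} →
        D \ Finset.image c {@Finset.max' T (o i) Finset.univ Finset.univ_nonempty} = {i}) := by
  subst hD
  constructor
  · intro X C
    constructor
    · rintro ⟨h1', ⟨⟨hCne, hdom, hcard⟩, hcards⟩, hface⟩
      rcases hface with ⟨hDC, x, hx, hXe⟩ | ⟨hXe, j, hj, hDj⟩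
      · have hC1 : C.card = 1 := by rw [← hDC]; simp
        have hX1 : X.card = 1 := by omega
        obtain ⟨z, hz⟩ := Finset.card_eq_one.mp hX1
        subst hz
        simp only [Finset.mem_singleton] at hx
        subst hx
        have hXne : ({x} : Finset T).Nonempty := Finset.singleton_nonempty x
        have hmin : @Finset.min' T (o i) {x} hXne = x := by
          exact @Finset.min'_singleton T (o i) x
        have hle : ∀ y : T, (o i).le y x := by
          intro y
          by_contra hy
          exact hdom hXne ⟨y, by
            intro j hj
            rw [← hDC, Finset.mem_singleton] at hj
            rw [hj]
            rw [hmin]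
            exact (@lt_of_not_ge T (o i) x y hy)⟩
        have hx' : x = @Finset.max' T (o i) Finset.univ Finset.univ_nonempty := by
          refine @le_antisymm T (o i).toPartialOrder _ _ ?_ ?_
          · exact @Finset.le_max' T (o i) _ x (Finset.mem_univ x)
          · exact hle _
        exact ⟨by rw [hx'], hDC.symm⟩
      · exfalso
        rw [← hXe, Finset.card_empty] at hcards
        rw [Finset.card_eq_zero.mp hcards] at hCne
        exact Finset.not_nonempty_empty hCne
    · rintro ⟨hX, hC⟩
      subst hX; subst hC
      set M := @Finset.max' T (o i) Finset.univ Finset.univ_nonempty with hM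
      refine ⟨h1, ⟨⟨Finset.singleton_nonempty i, ?_, ?_⟩, by simp⟩, Or.inl ⟨rfl, M, Finset.mem_singleton_self M, by simp⟩⟩
      · intro hXne
        rintro ⟨y, hy⟩
        have := hy i (Finset.mem_singleton_self i)
        rw [@Finset.min'_singleton T (o i)] at this
        exact @not_lt_of_ge T (o i).toPreorder y M (@Finset.le_max' T (o i) _ y (Finset.mem_univ y)) this
      · exact le_trans (Finset.card_le_card Finset.sdiff_subset) (by simp)
  · intro hne
    set M := @Finset.max' T (o i) Finset.univ Finset.univ_nonempty with hM
    have : c M ≠ i := by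
      intro h; apply hne; simp [h]
    ext j
    simp only [Finset.mem_sdiff, Finset.mem_singleton, Finset.image_singleton]
    constructor
    · rintro ⟨hj, _⟩; exact hj
    · rintro rfl; exact ⟨rfl, fun h => this h.symm⟩
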